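/- Residuals of traces and braidings: suppose t : P ⟶ā R is a trace (a finite sequence of composable transitions with action sequence ā) and γ = φ ∘ σ : P ⋈ P' is a braiding, with σ the braid renaming and φ a braiding congruence. Then there exist a process R', a trace t/γ : P' ⟶(σ* ā) R' whose action sequence is the renaming of ā along σ (residuating σ through ā), and a braiding γ/t : R ⋈ R'. -/

import Mathlib

/-- Contexts are natural numbers; names in context `Γ` are de Bruijn indices below `Γ`. -/
abbrev Name (Γ : ℕ) : Type := Fin Γ

/-- The renaming `push : Fin Γ → Fin (Γ+1)` sends `x` to `x+1`, freeing the index `0`. -/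
def push {Γ : ℕ} (x : Name Γ) : Name (Γ + 1) := x.succ

/-- For `y : Fin Γ`, the renaming `pop y : Fin (Γ+1) → Fin Γ` sends `0` to `y` and `x+1` to `x`. -/
def pop {Γ : ℕ} (y : Name Γ) : Name (Γ + 1) → Name Γ
  | ⟨0, _⟩ => y
  | ⟨x + 1, h⟩ => ⟨x, Nat.lt_of_succ_lt_succ h⟩

/-- The renaming `swap : Fin (Γ+2) → Fin (Γ+2)` sends `0` to `1`, `1` to `0` and `x+2` to itself. -/
def swap {Γ : ℕ} : Name (Γ + 2) → Name (Γ + 2)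
  | ⟨0, _⟩ => ⟨1, by omega⟩
  | ⟨1, _⟩ => ⟨0, by omega⟩
  | ⟨x + 2, h⟩ => ⟨x + 2, h⟩

/-- The lift `suc ρ : Fin (Γ+1) → Fin (Δ+1)` of a renaming `ρ : Fin Γ → Fin Δ` sends
`0` to `0` and `x+1` to `(ρ x)+1`. -/
def sucR {Γ Δ : ℕ} (ρ : Name Γ → Name Δ) : Name (Γ + 1) → Name (Δ + 1)
  | ⟨0, _⟩ => ⟨0, Nat.succ_pos Δ⟩
  | ⟨x + 1, h⟩ => (ρ ⟨x, Nat.lt_of_succ_lt_succ h⟩).succ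

-- defeq tests
/-- Processes over the context `Γ`, in de Bruijn form. -/
inductive Proc : ℕ → Type where
  /-- The inactive process `0`. -/
  | nil : {Γ : ℕ} → Proc Γ
  /-- Input prefix `x.P` (binding one name). -/
  | input : {Γ : ℕ} → Name Γ → Proc (Γ + 1) → Proc Γ
  /-- Output prefix `x⟨y⟩.P`. -/
  | output : {Γ : ℕ} → Name Γ → Name Γ → Proc Γ → Proc Γ
  /-- Choice `P + Q`. -/
  | choice : {Γ : ℕ} → Proc Γ → Proc Γ → Proc Γ
  /-- Parallel composition `P ∣ Q`. -/
  | par : {Γ : ℕ} → Proc Γ → Proc Γ → Proc Γ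
  /-- Restriction `ν P` (binding one name). -/
  | nu : {Γ : ℕ} → Proc (Γ + 1) → Proc Γ
  /-- Replication `!P`. -/
  | rep : {Γ : ℕ} → Proc Γ → Proc Γ

/-- The functorial extension of a renaming to processes, going under the binders of
input and restriction via the lift `sucR`. -/
def Proc.rename : {Γ Δ : ℕ} → (Name Γ → Name Δ) → Proc Γ → Proc Δ
  | _, _, _, .nil => .nil
  | _, _, ρ, .input x P => .input (ρ x) (P.rename (sucR ρ))
  | _, _, ρ, .output x y P => .output (ρ x) (ρ y) (P.rename ρ)
  | _, _, ρ, .choice P Q => .choice (P.rename ρ) (Q.rename ρ)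
  | _, _, ρ, .par P Q => .par (P.rename ρ) (Q.rename ρ)
  | _, _, ρ, .nu P => .nu (P.rename (sucR ρ))
  | _, _, ρ, .rep P => .rep (P.rename ρ)
/-- Actions are either *bound* (input and bound output, whose target context gains a
fresh name) or *non-bound* (output and silent, whose target context is unchanged). -/
inductive ActTy : Type where
  | bound : ActTy
  | nonbound : ActTy

/-- The target context of an action of the given kind performed in context `Γ`. -/
def ActTy.tgt : ActTy → ℕ → ℕ
  | .bound, Γ => Γ + 1
  | .nonbound, Γ => Γ

attribute [reducible] ActTy.tgt

/-- Actions over the context `Γ`. -/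
inductive Act : ActTy → ℕ → Type where
  /-- Input `x`. -/
  | inp : {Γ : ℕ} → Name Γ → Act .bound Γ
  /-- Bound output `x⟨ν⟩` (output of a name whose scope is being extruded). -/
  | bout : {Γ : ℕ} → Name Γ → Act .bound Γ
  /-- Output `x⟨y⟩`. -/
  | out : {Γ : ℕ} → Name Γ → Name Γ → Act .nonbound Γ
  /-- Silent action `τ`. -/
  | tau : {Γ : ℕ} → Act .nonbound Γ

/-- The extension of a renaming to actions. -/
def Act.rename {Γ Δ : ℕ} (ρ : Name Γ → Name Δ) : {ty : ActTy} → Act ty Γ → Act ty Δ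
  | _, .inp x => .inp (ρ x)
  | _, .bout x => .bout (ρ x)
  | _, .out x y => .out (ρ x) (ρ y)
  | _, .tau => .tau

/-- The residual `ρ/a` of a renaming `ρ` after an action of kind `ty`:
`suc ρ` if the action is bound and `ρ` itself otherwise. -/
def resRen : (ty : ActTy) → {Γ Δ : ℕ} → (Name Γ → Name Δ) → Name (ty.tgt Γ) → Name (ty.tgt Δ)
  | .bound, _, _, ρ => sucR ρ
  | .nonbound, _, _, ρ => ρ
/-- The labelled transition relation, in proof-relevant form: an element of
`Tr P a R` is a derivation (a "proved transition") of `P ⟶a R`. -/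
inductive Tr : {Γ : ℕ} → {ty : ActTy} → Proc Γ → Act ty Γ → Proc (ActTy.tgt ty Γ) → Type where
  /-- `x.P  ⟶x  P`. -/
  | inp : {Γ : ℕ} → (x : Name Γ) → (P : Proc (Γ + 1)) →
      Tr (.input x P) (.inp x) P
  /-- `x⟨y⟩.P  ⟶x⟨y⟩  P`. -/
  | out : {Γ : ℕ} → (x y : Name Γ) → (P : Proc Γ) →
      Tr (.output x y P) (.out x y) P
  /-- Choose the left branch. -/
  | sumL : {Γ : ℕ} → {ty : ActTy} → {P : Proc Γ} → (Q : Proc Γ) → {a : Act ty Γ} →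
      {R : Proc (ActTy.tgt ty Γ)} → Tr P a R → Tr (.choice P Q) a R
  /-- Choose the right branch. -/
  | sumR : {Γ : ℕ} → {ty : ActTy} → (P : Proc Γ) → {Q : Proc Γ} → {a : Act ty Γ} →
      {R : Proc (ActTy.tgt ty Γ)} → Tr Q a R → Tr (.choice P Q) a R
  /-- Propagate a non-bound action through a parallel composition on the left. -/
  | parLC : {Γ : ℕ} → {P : Proc Γ} → (Q : Proc Γ) → {c : Act .nonbound Γ} → {R : Proc Γ} →
      Tr P c R → Tr (.par P Q) c (.par R Q)
  /-- Propagate a bound action through a parallel composition on the left,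
  reserving the fresh name `0` in the passive component via `push`. -/
  | parLB : {Γ : ℕ} → {P : Proc Γ} → (Q : Proc Γ) → {b : Act .bound Γ} → {R : Proc (Γ + 1)} →
      Tr P b R → Tr (.par P Q) b (.par R (Q.rename push))
  /-- Propagate a non-bound action through a parallel composition on the right. -/
  | parRC : {Γ : ℕ} → (P : Proc Γ) → {Q : Proc Γ} → {c : Act .nonbound Γ} → {S : Proc Γ} →
      Tr Q c S → Tr (.par P Q) c (.par P S)
  /-- Propagate a bound action through a parallel composition on the right. -/
  | parRB : {Γ : ℕ} → (P : Proc Γ) → {Q : Proc Γ} → {b : Act .bound Γ} → {S : Proc (Γ + 1)} →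
      Tr Q b S → Tr (.par P Q) b (.par (P.rename push) S)
  /-- Communication rendezvous, receiving `y` on the left. -/
  | comL : {Γ : ℕ} → {P Q : Proc Γ} → {x y : Name Γ} → {R : Proc (Γ + 1)} → {S : Proc Γ} →
      Tr P (.inp x) R → Tr Q (.out x y) S →
      Tr (.par P Q) .tau (.par (R.rename (pop y)) S)
  /-- Communication rendezvous, receiving `y` on the right. -/
  | comR : {Γ : ℕ} → {P Q : Proc Γ} → {x y : Name Γ} → {R : Proc Γ} → {S : Proc (Γ + 1)} →
      Tr P (.out x y) R → Tr Q (.inp x) S →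
      Tr (.par P Q) .tau (.par R (S.rename (pop y)))
  /-- Initiate extrusion of the scope of a `ν`-binder: an output `(x+1)⟨0⟩` under the
  binder becomes a bound output `x⟨ν⟩`. -/
  | extrude : {Γ : ℕ} → {P : Proc (Γ + 1)} → {x : Name Γ} → {R : Proc (Γ + 1)} →
      Tr P (.out (push x) 0) R → Tr (.nu P) (.bout x) R
  /-- Extrusion rendezvous ("close"), receiving the extruded name `0` on the left. -/
  | closeL : {Γ : ℕ} → {P Q : Proc Γ} → {x : Name Γ} → {R S : Proc (Γ + 1)} →
      Tr P (.inp x) R → Tr Q (.bout x) S →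
      Tr (.par P Q) .tau (.nu (.par R S))
  /-- Extrusion rendezvous ("close"), receiving the extruded name `0` on the right. -/
  | closeR : {Γ : ℕ} → {P Q : Proc Γ} → {x : Name Γ} → {R S : Proc (Γ + 1)} →
      Tr P (.bout x) R → Tr Q (.inp x) S →
      Tr (.par P Q) .tau (.nu (.par R S))
  /-- Propagate a non-bound action of the form `push* c` through a `ν`-binder. -/
  | nuC : {Γ : ℕ} → {P : Proc (Γ + 1)} → {c : Act .nonbound Γ} → {R : Proc (Γ + 1)} →
      Tr P (c.rename push) R → Tr (.nu P) c (.nu R)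
  /-- Propagate a bound action of the form `push* b` through a `ν`-binder,
  rewiring the target with the braid `swap`. -/
  | nuB : {Γ : ℕ} → {P : Proc (Γ + 1)} → {b : Act .bound Γ} → {R : Proc (Γ + 2)} →
      Tr P (b.rename push) R → Tr (.nu P) b (.nu (R.rename swap))
  /-- Replication. -/
  | rep : {Γ : ℕ} → {ty : ActTy} → {P : Proc Γ} → {a : Act ty Γ} → {R : Proc (ActTy.tgt ty Γ)} →
      Tr (.par P (.rep P)) a R → Tr (.rep P) a R
/-- Braiding congruence `P ≅ Q`: the congruence on processes generated by the braidings
`ν ν (swap* P) ≅ ν ν P` and `ν ν P ≅ ν ν (swap* P)`, transitivity, and closure under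
all process constructors. -/
inductive BC : {Γ : ℕ} → Proc Γ → Proc Γ → Type where
  /-- `ν ν (swap* P) ≅ ν ν P`. -/
  | nuSwap : {Γ : ℕ} → (P : Proc (Γ + 2)) → BC (.nu (.nu (P.rename swap))) (.nu (.nu P))
  /-- `ν ν P ≅ ν ν (swap* P)`. -/
  | nuSwapInv : {Γ : ℕ} → (P : Proc (Γ + 2)) → BC (.nu (.nu P)) (.nu (.nu (P.rename swap)))
  /-- Transitivity. -/
  | trans : {Γ : ℕ} → {P R S : Proc Γ} → BC P R → BC R S → BC P S
  /-- `0 ≅ 0`. -/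
  | nil : {Γ : ℕ} → BC (Proc.nil : Proc Γ) .nil
  /-- Compatibility with input prefix. -/
  | input : {Γ : ℕ} → (x : Name Γ) → {P R : Proc (Γ + 1)} → BC P R →
      BC (.input x P) (.input x R)
  /-- Compatibility with output prefix. -/
  | output : {Γ : ℕ} → (x y : Name Γ) → {P R : Proc Γ} → BC P R →
      BC (.output x y P) (.output x y R)
  /-- Compatibility with choice. -/
  | choice : {Γ : ℕ} → {P R Q S : Proc Γ} → BC P R → BC Q S →
      BC (.choice P Q) (.choice R S)
  /-- Compatibility with parallel composition. -/
  | par : {Γ : ℕ} → {P R Q S : Proc Γ} → BC P R → BC Q S →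
      BC (.par P Q) (.par R S)
  /-- Compatibility with restriction. -/
  | nu : {Γ : ℕ} → {P R : Proc (Γ + 1)} → BC P R → BC (.nu P) (.nu R)
  /-- Compatibility with replication. -/
  | rep : {Γ : ℕ} → {P R : Proc Γ} → BC P R → BC (.rep P) (.rep R)
/-- Finite sequences of composable actions, from context `Γ` to context `Δ`. -/
inductive ActSeq : ℕ → ℕ → Type where
  | nil : {Γ : ℕ} → ActSeq Γ Γ
  | cons : {Γ Δ : ℕ} → {ty : ActTy} → (a : Act ty Γ) → ActSeq (ActTy.tgt ty Γ) Δ → ActSeq Γ Δ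

/-- The residual `σ* ā` of an action sequence along an (endo-)renaming, residuating
the renaming through the sequence. -/
def ActSeq.rename : {Γ Δ : ℕ} → (Name Γ → Name Γ) → ActSeq Γ Δ → ActSeq Γ Δ
  | _, _, _, .nil => .nil
  | _, _, σ, .cons a as => .cons (a.rename σ) (as.rename (resRen _ σ))

/-- Traces: finite sequences of composable transitions, with their action sequence. -/
inductive Trace : {Γ Δ : ℕ} → Proc Γ → ActSeq Γ Δ → Proc Δ → Type where
  | nil : {Γ : ℕ} → (P : Proc Γ) → Trace P .nil P
  | cons : {Γ Δ : ℕ} → {ty : ActTy} → {P : Proc Γ} → {a : Act ty Γ} →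
      {R : Proc (ActTy.tgt ty Γ)} → {as : ActSeq (ActTy.tgt ty Γ) Δ} → {S : Proc Δ} →
      Tr P a R → Trace R as S → Trace P (.cons a as) S

/-- Braid renamings: `id` or `swap`, possibly shifted under a context extension. -/
inductive IsBraid : {n : ℕ} → (Name n → Name n) → Prop where
  | id : {n : ℕ} → IsBraid (fun x : Name n => x)
  | swp : {n : ℕ} → IsBraid (swap : Name (n + 2) → Name (n + 2))
  | suc : {n : ℕ} → {σ : Name n → Name n} → IsBraid σ → IsBraid (sucR σ)

section Residuals

/-! ### Basic facts about renamings -/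

theorem fin_zero_mk {n : ℕ} : (0 : Fin (n + 1)) = ⟨0, Nat.succ_pos n⟩ := by
  ext; simp

theorem sucR_sucR {Γ Δ Θ : ℕ} (ρ : Name Γ → Name Δ) (ρ' : Name Δ → Name Θ) :
    ∀ x, sucR ρ' (sucR ρ x) = sucR (fun y => ρ' (ρ y)) x
  | ⟨0, _⟩ => rfl
  | ⟨n + 1, _⟩ => rfl

theorem sucR_ext {Γ Δ : ℕ} {ρ ρ' : Name Γ → Name Δ} (h : ∀ x, ρ x = ρ' x) :
    ∀ x, sucR ρ x = sucR ρ' x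
  | ⟨0, _⟩ => rfl
  | ⟨n + 1, _⟩ => by simp [sucR, h]

theorem sucR_id {Γ : ℕ} : ∀ x : Name (Γ + 1), sucR (fun y : Name Γ => y) x = x
  | ⟨0, _⟩ => rfl
  | ⟨n + 1, _⟩ => rfl

theorem Proc.rename_ext : ∀ {Γ Δ : ℕ} (P : Proc Γ) (ρ ρ' : Name Γ → Name Δ),
    (∀ x, ρ x = ρ' x) → P.rename ρ = P.rename ρ'
  | _, _, .nil, _, _, _ => rfl
  | _, _, .input x P, ρ, ρ', h => by
      simp [Proc.rename, h, Proc.rename_ext P _ _ (sucR_ext h)]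
  | _, _, .output x y P, ρ, ρ', h => by
      simp [Proc.rename, h, Proc.rename_ext P _ _ h]
  | _, _, .choice P Q, ρ, ρ', h => by
      simp [Proc.rename, Proc.rename_ext P _ _ h, Proc.rename_ext Q _ _ h]
  | _, _, .par P Q, ρ, ρ', h => by
      simp [Proc.rename, Proc.rename_ext P _ _ h, Proc.rename_ext Q _ _ h]
  | _, _, .nu P, ρ, ρ', h => by
      simp [Proc.rename, Proc.rename_ext P _ _ (sucR_ext h)]
  | _, _, .rep P, ρ, ρ', h => by
      simp [Proc.rename, Proc.rename_ext P _ _ h]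

theorem Proc.rename_comp : ∀ {Γ Δ Θ : ℕ} (P : Proc Γ) (ρ : Name Γ → Name Δ)
    (ρ' : Name Δ → Name Θ), (P.rename ρ).rename ρ' = P.rename (fun x => ρ' (ρ x))
  | _, _, _, .nil, _, _ => rfl
  | _, _, _, .input x P, ρ, ρ' => by
      simp [Proc.rename, Proc.rename_comp P (sucR ρ) (sucR ρ')]
      exact Proc.rename_ext P _ _ (sucR_sucR ρ ρ')
  | _, _, _, .output x y P, ρ, ρ' => by
      simp [Proc.rename, Proc.rename_comp P ρ ρ']
  | _, _, _, .choice P Q, ρ, ρ' => by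
      simp [Proc.rename, Proc.rename_comp P ρ ρ', Proc.rename_comp Q ρ ρ']
  | _, _, _, .par P Q, ρ, ρ' => by
      simp [Proc.rename, Proc.rename_comp P ρ ρ', Proc.rename_comp Q ρ ρ']
  | _, _, _, .nu P, ρ, ρ' => by
      simp [Proc.rename, Proc.rename_comp P (sucR ρ) (sucR ρ')]
      exact Proc.rename_ext P _ _ (sucR_sucR ρ ρ')
  | _, _, _, .rep P, ρ, ρ' => by
      simp [Proc.rename, Proc.rename_comp P ρ ρ']

theorem Proc.rename_id : ∀ {Γ : ℕ} (P : Proc Γ), P.rename (fun x => x) = P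
  | _, .nil => rfl
  | _, .input x P => by
      simp [Proc.rename]
      rw [Proc.rename_ext P _ _ sucR_id, Proc.rename_id P]
  | _, .output x y P => by simp [Proc.rename, Proc.rename_id P]
  | _, .choice P Q => by simp [Proc.rename, Proc.rename_id P, Proc.rename_id Q]
  | _, .par P Q => by simp [Proc.rename, Proc.rename_id P, Proc.rename_id Q]
  | _, .nu P => by
      simp [Proc.rename]
      rw [Proc.rename_ext P _ _ sucR_id, Proc.rename_id P]
  | _, .rep P => by simp [Proc.rename, Proc.rename_id P]

theorem swap_swap {n : ℕ} : ∀ x : Name (n + 2), swap (swap x) = x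
  | ⟨0, _⟩ => rfl
  | ⟨1, _⟩ => rfl
  | ⟨k + 2, _⟩ => rfl

theorem Proc.rename_swap_swap {n : ℕ} (P : Proc (n + 2)) :
    (P.rename swap).rename swap = P := by
  rw [Proc.rename_comp, Proc.rename_ext P _ _ swap_swap, Proc.rename_id]

theorem sucR_push {Γ Δ : ℕ} (ρ : Name Γ → Name Δ) (x : Name Γ) :
    sucR ρ (push x) = push (ρ x) := rfl

theorem pop_sucR {Γ Δ : ℕ} (ρ : Name Γ → Name Δ) (y : Name Γ) :
    ∀ x, pop (ρ y) (sucR ρ x) = ρ (pop y x)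
  | ⟨0, _⟩ => rfl
  | ⟨n + 1, _⟩ => rfl

theorem ss_swap {Γ Δ : ℕ} (ρ : Name Γ → Name Δ) :
    ∀ x : Name (Γ + 2), sucR (sucR ρ) (swap x) = swap (sucR (sucR ρ) x)
  | ⟨0, _⟩ => rfl
  | ⟨1, _⟩ => rfl
  | ⟨k + 2, _⟩ => rfl

theorem braid_rel {n : ℕ} :
    ∀ x : Name (n + 3), swap (sucR swap (swap x)) = sucR swap (swap (sucR swap x))
  | ⟨0, _⟩ => rfl
  | ⟨1, _⟩ => rfl
  | ⟨2, _⟩ => rfl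
  | ⟨k + 3, _⟩ => rfl

/-- `(s2 ∘ s1 ∘ s2)* R = (s1 ∘ s2 ∘ s1)* R` (braid relation at the process level). -/
theorem Proc.rename_braid {n : ℕ} (R : Proc (n + 3)) :
    ((R.rename (sucR swap)).rename swap).rename (sucR swap) =
      ((R.rename swap).rename (sucR swap)).rename swap := by
  rw [Proc.rename_comp, Proc.rename_comp, Proc.rename_comp, Proc.rename_comp]
  exact Proc.rename_ext R _ _ (fun x => (braid_rel x).symm)

theorem Proc.rename_push_sucR {Γ Δ : ℕ} (ρ : Name Γ → Name Δ) (Q : Proc Γ) :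
    (Q.rename push).rename (sucR ρ) = (Q.rename ρ).rename push := by
  rw [Proc.rename_comp, Proc.rename_comp]
  exact Proc.rename_ext Q _ _ (fun x => sucR_push ρ x)

theorem Proc.rename_sucR_pop {Γ Δ : ℕ} (ρ : Name Γ → Name Δ) (y : Name Γ) (R : Proc (Γ + 1)) :
    (R.rename (sucR ρ)).rename (pop (ρ y)) = (R.rename (pop y)).rename ρ := by
  rw [Proc.rename_comp, Proc.rename_comp]
  exact Proc.rename_ext R _ _ (pop_sucR ρ y)

theorem Proc.rename_ss_swap {Γ Δ : ℕ} (ρ : Name Γ → Name Δ) (R : Proc (Γ + 2)) :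
    (R.rename (sucR (sucR ρ))).rename swap = (R.rename swap).rename (sucR (sucR ρ)) := by
  rw [Proc.rename_comp, Proc.rename_comp]
  exact Proc.rename_ext R _ _ (fun x => (ss_swap ρ x).symm)

theorem Act.rename_rename {Γ Δ Θ : ℕ} {ty : ActTy} (f : Name Γ → Name Δ)
    (g : Name Δ → Name Θ) (a : Act ty Γ) :
    (a.rename f).rename g = a.rename (fun x => g (f x)) := by
  cases a <;> rfl

theorem Act.rename_ext {Γ Δ : ℕ} {ty : ActTy} {f g : Name Γ → Name Δ}
    (a : Act ty Γ) (h : ∀ x, f x = g x) : a.rename f = a.rename g := by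
  cases a <;> simp [Act.rename, h]

theorem Act.rename_push_sucR {Γ Δ : ℕ} {ty : ActTy} (ρ : Name Γ → Name Δ) (a : Act ty Γ) :
    (a.rename push).rename (sucR ρ) = (a.rename ρ).rename push := by
  rw [Act.rename_rename, Act.rename_rename]
  exact Act.rename_ext a (fun x => sucR_push ρ x)

theorem swap_push_push {Γ : ℕ} (x : Name Γ) : swap (push (push x)) = push (push x) := rfl

theorem Act.rename_pp_swap {Γ : ℕ} {ty : ActTy} (a : Act ty Γ) :
    ((a.rename push).rename push).rename swap = (a.rename push).rename push := by
  rw [Act.rename_rename, Act.rename_rename, Act.rename_rename]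
  exact Act.rename_ext a (fun x => swap_push_push x)

theorem push_zero {Γ : ℕ} : push (0 : Name (Γ + 1)) = ⟨1, by omega⟩ := by
  rw [fin_zero_mk]; rfl

theorem swap_push_zero {Γ : ℕ} : swap (push (0 : Name (Γ + 1))) = (0 : Name (Γ + 2)) := by
  rw [push_zero, fin_zero_mk]; rfl

theorem sucR_zero {Γ Δ : ℕ} (ρ : Name Γ → Name Δ) : sucR ρ 0 = 0 := by
  rw [fin_zero_mk, fin_zero_mk]; rfl


/-! ### Renaming transitions -/

theorem Tr.renameN {Γ : ℕ} {ty : ActTy} {P : Proc Γ} {a : Act ty Γ} {R : Proc (ActTy.tgt ty Γ)}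
    (t : Tr P a R) : ∀ {Δ : ℕ} (ρ : Name Γ → Name Δ),
    Nonempty (Tr (P.rename ρ) (a.rename ρ) (R.rename (resRen ty ρ))) := by
  induction t with
  | inp x P =>
    intro Δ ρ
    exact ⟨.inp (ρ x) (P.rename (sucR ρ))⟩
  | out x y P =>
    intro Δ ρ
    exact ⟨.out (ρ x) (ρ y) (P.rename ρ)⟩
  | sumL Q t ih =>
    intro Δ ρ
    obtain ⟨t'⟩ := ih ρ
    exact ⟨.sumL _ t'⟩
  | sumR P t ih =>
    intro Δ ρ
    obtain ⟨t'⟩ := ih ρ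
    exact ⟨.sumR _ t'⟩
  | parLC Q t ih =>
    intro Δ ρ
    obtain ⟨t'⟩ := ih ρ
    exact ⟨.parLC _ t'⟩
  | parLB Q t ih =>
    intro Δ ρ
    obtain ⟨t'⟩ := ih ρ
    refine ⟨?_⟩
    simp only [resRen, Proc.rename]
    rw [Proc.rename_push_sucR]
    exact .parLB _ t'
  | parRC P t ih =>
    intro Δ ρ
    obtain ⟨t'⟩ := ih ρ
    exact ⟨.parRC _ t'⟩
  | parRB P t ih =>
    intro Δ ρ
    obtain ⟨t'⟩ := ih ρ
    refine ⟨?_⟩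
    simp only [resRen, Proc.rename]
    rw [Proc.rename_push_sucR]
    exact .parRB _ t'
  | @comL Γ P Q x y R S tP tQ ihP ihQ =>
    intro Δ ρ
    obtain ⟨tP'⟩ := ihP ρ
    obtain ⟨tQ'⟩ := ihQ ρ
    refine ⟨?_⟩
    simp only [resRen, Proc.rename]
    rw [← Proc.rename_sucR_pop]
    exact .comL tP' tQ'
  | @comR Γ P Q x y R S tP tQ ihP ihQ =>
    intro Δ ρ
    obtain ⟨tP'⟩ := ihP ρ
    obtain ⟨tQ'⟩ := ihQ ρ
    refine ⟨?_⟩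
    simp only [resRen, Proc.rename]
    rw [← Proc.rename_sucR_pop]
    exact .comR tP' tQ'
  | @extrude Γ P x R t ih =>
    intro Δ ρ
    obtain ⟨t'⟩ := ih (sucR ρ)
    refine ⟨?_⟩
    simp only [Act.rename] at t'
    rw [sucR_zero, sucR_push] at t'
    exact .extrude t'
  | closeL tP tQ ihP ihQ =>
    intro Δ ρ
    obtain ⟨tP'⟩ := ihP ρ
    obtain ⟨tQ'⟩ := ihQ ρ
    exact ⟨.closeL tP' tQ'⟩
  | closeR tP tQ ihP ihQ =>
    intro Δ ρ
    obtain ⟨tP'⟩ := ihP ρ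
    obtain ⟨tQ'⟩ := ihQ ρ
    exact ⟨.closeR tP' tQ'⟩
  | @nuC Γ P c R t ih =>
    intro Δ ρ
    obtain ⟨t'⟩ := ih (sucR ρ)
    rw [Act.rename_push_sucR] at t'
    exact ⟨.nuC t'⟩
  | @nuB Γ P b R t ih =>
    intro Δ ρ
    obtain ⟨t'⟩ := ih (sucR ρ)
    rw [Act.rename_push_sucR] at t'
    refine ⟨?_⟩
    simp only [resRen, Proc.rename]
    rw [← Proc.rename_ss_swap]
    exact .nuB t'
  | rep t ih =>
    intro Δ ρ
    obtain ⟨t'⟩ := ih ρ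
    exact ⟨.rep t'⟩


/-! ### Braiding congruence infrastructure -/

/-- Reflexivity of braiding congruence. -/
def BC.rfl : {Γ : ℕ} → (P : Proc Γ) → BC P P
  | _, .nil => .nil
  | _, .input x P => .input x (BC.rfl P)
  | _, .output x y P => .output x y (BC.rfl P)
  | _, .choice P Q => .choice (BC.rfl P) (BC.rfl Q)
  | _, .par P Q => .par (BC.rfl P) (BC.rfl Q)
  | _, .nu P => .nu (BC.rfl P)
  | _, .rep P => .rep (BC.rfl P)

/-- Braiding congruence is closed under renaming. -/
theorem BC.renameN {Γ : ℕ} {P Q : Proc Γ} (φ : BC P Q) :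
    ∀ {Δ : ℕ} (ρ : Name Γ → Name Δ), Nonempty (BC (P.rename ρ) (Q.rename ρ)) := by
  induction φ with
  | nuSwap P =>
    intro Δ ρ
    refine ⟨?_⟩
    simp only [Proc.rename]
    rw [← Proc.rename_ss_swap]
    exact .nuSwap _
  | nuSwapInv P =>
    intro Δ ρ
    refine ⟨?_⟩
    simp only [Proc.rename]
    rw [← Proc.rename_ss_swap]
    exact .nuSwapInv _
  | trans φ ψ ihφ ihψ =>
    intro Δ ρ
    obtain ⟨φ'⟩ := ihφ ρ
    obtain ⟨ψ'⟩ := ihψ ρ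
    exact ⟨.trans φ' ψ'⟩
  | nil => exact fun ρ => ⟨.nil⟩
  | input x φ ih =>
    intro Δ ρ
    obtain ⟨φ'⟩ := ih (sucR ρ)
    exact ⟨.input _ φ'⟩
  | output x y φ ih =>
    intro Δ ρ
    obtain ⟨φ'⟩ := ih ρ
    exact ⟨.output _ _ φ'⟩
  | choice φ ψ ihφ ihψ =>
    intro Δ ρ
    obtain ⟨φ'⟩ := ihφ ρ
    obtain ⟨ψ'⟩ := ihψ ρ
    exact ⟨.choice φ' ψ'⟩
  | par φ ψ ihφ ihψ =>
    intro Δ ρ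
    obtain ⟨φ'⟩ := ihφ ρ
    obtain ⟨ψ'⟩ := ihψ ρ
    exact ⟨.par φ' ψ'⟩
  | nu φ ih =>
    intro Δ ρ
    obtain ⟨φ'⟩ := ih (sucR ρ)
    exact ⟨.nu φ'⟩
  | rep φ ih =>
    intro Δ ρ
    obtain ⟨φ'⟩ := ih ρ
    exact ⟨.rep φ'⟩

/-- One-step braiding congruence: congruence closure of the generators, without
transitivity (in `Prop`). -/
inductive BC0 : {Γ : ℕ} → Proc Γ → Proc Γ → Prop where
  | nuSwap : {Γ : ℕ} → (P : Proc (Γ + 2)) → BC0 (.nu (.nu (P.rename swap))) (.nu (.nu P))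
  | nuSwapInv : {Γ : ℕ} → (P : Proc (Γ + 2)) → BC0 (.nu (.nu P)) (.nu (.nu (P.rename swap)))
  | nil : {Γ : ℕ} → BC0 (Proc.nil : Proc Γ) .nil
  | input : {Γ : ℕ} → (x : Name Γ) → {P R : Proc (Γ + 1)} → BC0 P R →
      BC0 (.input x P) (.input x R)
  | output : {Γ : ℕ} → (x y : Name Γ) → {P R : Proc Γ} → BC0 P R →
      BC0 (.output x y P) (.output x y R)
  | choice : {Γ : ℕ} → {P R Q S : Proc Γ} → BC0 P R → BC0 Q S →
      BC0 (.choice P Q) (.choice R S)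
  | par : {Γ : ℕ} → {P R Q S : Proc Γ} → BC0 P R → BC0 Q S →
      BC0 (.par P Q) (.par R S)
  | nu : {Γ : ℕ} → {P R : Proc (Γ + 1)} → BC0 P R → BC0 (.nu P) (.nu R)
  | rep : {Γ : ℕ} → {P R : Proc Γ} → BC0 P R → BC0 (.rep P) (.rep R)

theorem BC0.refl : ∀ {Γ : ℕ} (P : Proc Γ), BC0 P P
  | _, .nil => .nil
  | _, .input x P => .input x (BC0.refl P)
  | _, .output x y P => .output x y (BC0.refl P)
  | _, .choice P Q => .choice (BC0.refl P) (BC0.refl Q)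
  | _, .par P Q => .par (BC0.refl P) (BC0.refl Q)
  | _, .nu P => .nu (BC0.refl P)
  | _, .rep P => .rep (BC0.refl P)

theorem BC0.toBC {Γ : ℕ} {P Q : Proc Γ} (φ : BC0 P Q) : Nonempty (BC P Q) := by
  induction φ with
  | nuSwap P => exact ⟨.nuSwap P⟩
  | nuSwapInv P => exact ⟨.nuSwapInv P⟩
  | nil => exact ⟨.nil⟩
  | input x _ ih => obtain ⟨φ⟩ := ih; exact ⟨.input x φ⟩
  | output x y _ ih => obtain ⟨φ⟩ := ih; exact ⟨.output x y φ⟩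
  | choice _ _ ih1 ih2 => obtain ⟨φ⟩ := ih1; obtain ⟨ψ⟩ := ih2; exact ⟨.choice φ ψ⟩
  | par _ _ ih1 ih2 => obtain ⟨φ⟩ := ih1; obtain ⟨ψ⟩ := ih2; exact ⟨.par φ ψ⟩
  | nu _ ih => obtain ⟨φ⟩ := ih; exact ⟨.nu φ⟩
  | rep _ ih => obtain ⟨φ⟩ := ih; exact ⟨.rep φ⟩

/-- Chains of one-step braiding congruences. -/
def BCs {Γ : ℕ} : Proc Γ → Proc Γ → Prop := Relation.ReflTransGen BC0

theorem BCs.lift1 {Γ Δ : ℕ} (f : Proc Γ → Proc Δ)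
    (hf : ∀ {A B : Proc Γ}, BC0 A B → BC0 (f A) (f B)) {P Q : Proc Γ}
    (h : BCs P Q) : BCs (f P) (f Q) :=
  Relation.ReflTransGen.lift f (fun _ _ h0 => hf h0) _ _ h

theorem BC.toBCs {Γ : ℕ} {P Q : Proc Γ} (φ : BC P Q) : BCs P Q := by
  induction φ with
  | nuSwap P => exact Relation.ReflTransGen.single (.nuSwap P)
  | nuSwapInv P => exact Relation.ReflTransGen.single (.nuSwapInv P)
  | trans _ _ ih1 ih2 => exact ih1.trans ih2
  | nil => exact Relation.ReflTransGen.refl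
  | input x _ ih => exact BCs.lift1 (.input x) (fun h => .input x h) ih
  | output x y _ ih => exact BCs.lift1 (.output x y) (fun h => .output x y h) ih
  | @choice _ P R Q S _ _ ih1 ih2 =>
    exact (BCs.lift1 (fun A => .choice A Q) (fun h => .choice h (BC0.refl Q)) ih1).trans
      (BCs.lift1 (fun B => .choice R B) (fun h => .choice (BC0.refl R) h) ih2)
  | @par _ P R Q S _ _ ih1 ih2 =>
    exact (BCs.lift1 (fun A => .par A Q) (fun h => .par h (BC0.refl Q)) ih1).trans
      (BCs.lift1 (fun B => .par R B) (fun h => .par (BC0.refl R) h) ih2)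
  | nu _ ih => exact BCs.lift1 .nu (fun h => .nu h) ih
  | rep _ ih => exact BCs.lift1 .rep (fun h => .rep h) ih


/-! ### Residuation across the ν-swap generator -/

theorem swap_zero {Γ : ℕ} : swap (0 : Name (Γ + 2)) = push (0 : Name (Γ + 1)) := by
  rw [fin_zero_mk, push_zero]; rfl

theorem resNuSwap {Γ : ℕ} {ty : ActTy} (X : Proc (Γ + 2)) {a : Act ty Γ}
    {T : Proc (ActTy.tgt ty Γ)} (t : Tr (.nu (.nu (X.rename swap))) a T) :
    ∃ T' : Proc (ActTy.tgt ty Γ), Nonempty (Tr (.nu (.nu X)) a T') ∧ Nonempty (BC T T') := by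
  cases t with
  | extrude t1 =>
    cases t1 with
    | nuC t2 =>
      obtain ⟨t3⟩ := Tr.renameN t2 swap
      simp only [resRen] at t3
      rw [Proc.rename_swap_swap] at t3
      simp only [Act.rename] at t3
      rw [swap_push_push, swap_push_zero] at t3
      refine ⟨_, ⟨Tr.nuB (b := .bout _) (Tr.extrude t3)⟩, ?_⟩
      rw [Proc.rename_swap_swap]
      exact ⟨BC.rfl _⟩
  | nuC t1 =>
    cases t1 with
    | nuC t2 =>
      obtain ⟨t3⟩ := Tr.renameN t2 swap
      simp only [resRen] at t3
      rw [Proc.rename_swap_swap, Act.rename_pp_swap] at t3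
      exact ⟨_, ⟨.nuC (.nuC t3)⟩, ⟨.nuSwapInv _⟩⟩
  | nuB t1 =>
    rename_i b R1
    cases b with
    | inp x =>
      cases t1 with
      | nuB t2 =>
        obtain ⟨t3⟩ := Tr.renameN t2 swap
        simp only [resRen] at t3
        rw [Proc.rename_swap_swap, Act.rename_pp_swap] at t3
        refine ⟨_, ⟨Tr.nuB (Tr.nuB t3)⟩, ?_⟩
        simp only [Proc.rename]
        rw [Proc.rename_braid]
        exact ⟨.nuSwapInv _⟩
    | bout x =>
      cases t1 with
      | nuB t2 =>
        obtain ⟨t3⟩ := Tr.renameN t2 swap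
        simp only [resRen] at t3
        rw [Proc.rename_swap_swap, Act.rename_pp_swap] at t3
        refine ⟨_, ⟨Tr.nuB (Tr.nuB t3)⟩, ?_⟩
        simp only [Proc.rename]
        rw [Proc.rename_braid]
        exact ⟨.nuSwapInv _⟩
      | extrude t2 =>
        obtain ⟨t3⟩ := Tr.renameN t2 swap
        simp only [resRen] at t3
        rw [Proc.rename_swap_swap] at t3
        simp only [Act.rename] at t3
        rw [swap_push_push, swap_zero] at t3
        exact ⟨_, ⟨Tr.extrude (Tr.nuC (c := .out (push x) 0) t3)⟩, ⟨BC.rfl _⟩⟩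


/-! ### Residuation of transitions after braiding congruence -/

theorem resBC0 {Γ : ℕ} {ty : ActTy} {P : Proc Γ} {a : Act ty Γ} {T : Proc (ActTy.tgt ty Γ)}
    (t : Tr P a T) : ∀ {P' : Proc Γ}, BC0 P P' →
    ∃ T' : Proc (ActTy.tgt ty Γ), Nonempty (Tr P' a T') ∧ Nonempty (BC T T') := by
  induction t with
  | inp x P =>
    intro P' φ
    cases φ with
    | input x φ0 => exact ⟨_, ⟨.inp _ _⟩, φ0.toBC⟩
  | out x y P =>
    intro P' φ
    cases φ with
    | output x y φ0 => exact ⟨_, ⟨.out _ _ _⟩, φ0.toBC⟩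
  | sumL Q t ih =>
    intro P' φ
    cases φ with
    | choice φP φQ =>
      obtain ⟨T', ⟨tr⟩, bc⟩ := ih φP
      exact ⟨T', ⟨.sumL _ tr⟩, bc⟩
  | sumR P t ih =>
    intro P' φ
    cases φ with
    | choice φP φQ =>
      obtain ⟨T', ⟨tr⟩, bc⟩ := ih φQ
      exact ⟨T', ⟨.sumR _ tr⟩, bc⟩
  | parLC Q t ih =>
    intro P' φ
    cases φ with
    | par φP φQ =>
      obtain ⟨R', ⟨tr⟩, ⟨bc⟩⟩ := ih φP
      obtain ⟨bq⟩ := φQ.toBC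
      exact ⟨_, ⟨.parLC _ tr⟩, ⟨.par bc bq⟩⟩
  | parLB Q t ih =>
    intro P' φ
    cases φ with
    | par φP φQ =>
      obtain ⟨R', ⟨tr⟩, ⟨bc⟩⟩ := ih φP
      obtain ⟨bq⟩ := φQ.toBC
      obtain ⟨bq'⟩ := BC.renameN bq push
      exact ⟨_, ⟨.parLB _ tr⟩, ⟨.par bc bq'⟩⟩
  | parRC P t ih =>
    intro P' φ
    cases φ with
    | par φP φQ =>
      obtain ⟨S', ⟨tr⟩, ⟨bc⟩⟩ := ih φQ
      obtain ⟨bp⟩ := φP.toBC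
      exact ⟨_, ⟨.parRC _ tr⟩, ⟨.par bp bc⟩⟩
  | parRB P t ih =>
    intro P' φ
    cases φ with
    | par φP φQ =>
      obtain ⟨S', ⟨tr⟩, ⟨bc⟩⟩ := ih φQ
      obtain ⟨bp⟩ := φP.toBC
      obtain ⟨bp'⟩ := BC.renameN bp push
      exact ⟨_, ⟨.parRB _ tr⟩, ⟨.par bp' bc⟩⟩
  | comL tP tQ ihP ihQ =>
    intro P' φ
    cases φ with
    | par φP φQ =>
      obtain ⟨R', ⟨trP⟩, ⟨bcR⟩⟩ := ihP φP
      obtain ⟨S', ⟨trQ⟩, ⟨bcS⟩⟩ := ihQ φQ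
      obtain ⟨bcR'⟩ := BC.renameN bcR (pop _)
      exact ⟨_, ⟨.comL trP trQ⟩, ⟨.par bcR' bcS⟩⟩
  | comR tP tQ ihP ihQ =>
    intro P' φ
    cases φ with
    | par φP φQ =>
      obtain ⟨R', ⟨trP⟩, ⟨bcR⟩⟩ := ihP φP
      obtain ⟨S', ⟨trQ⟩, ⟨bcS⟩⟩ := ihQ φQ
      obtain ⟨bcS'⟩ := BC.renameN bcS (pop _)
      exact ⟨_, ⟨.comR trP trQ⟩, ⟨.par bcR bcS'⟩⟩
  | closeL tP tQ ihP ihQ =>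
    intro P' φ
    cases φ with
    | par φP φQ =>
      obtain ⟨R', ⟨trP⟩, ⟨bcR⟩⟩ := ihP φP
      obtain ⟨S', ⟨trQ⟩, ⟨bcS⟩⟩ := ihQ φQ
      exact ⟨_, ⟨.closeL trP trQ⟩, ⟨.nu (.par bcR bcS)⟩⟩
  | closeR tP tQ ihP ihQ =>
    intro P' φ
    cases φ with
    | par φP φQ =>
      obtain ⟨R', ⟨trP⟩, ⟨bcR⟩⟩ := ihP φP
      obtain ⟨S', ⟨trQ⟩, ⟨bcS⟩⟩ := ihQ φQ
      exact ⟨_, ⟨.closeR trP trQ⟩, ⟨.nu (.par bcR bcS)⟩⟩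
  | extrude t ih =>
    intro P' φ
    cases φ with
    | nu φ0 =>
      obtain ⟨R', ⟨tr⟩, bc⟩ := ih φ0
      exact ⟨R', ⟨.extrude tr⟩, bc⟩
    | nuSwap X => exact resNuSwap X (.extrude t)
    | nuSwapInv X =>
      rw [← Proc.rename_swap_swap X] at t
      exact resNuSwap (X.rename swap) (.extrude t)
  | nuC t ih =>
    intro P' φ
    cases φ with
    | nu φ0 =>
      obtain ⟨R', ⟨tr⟩, ⟨bc⟩⟩ := ih φ0
      exact ⟨_, ⟨.nuC tr⟩, ⟨.nu bc⟩⟩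
    | nuSwap X => exact resNuSwap X (.nuC t)
    | nuSwapInv X =>
      rw [← Proc.rename_swap_swap X] at t
      exact resNuSwap (X.rename swap) (.nuC t)
  | nuB t ih =>
    intro P' φ
    cases φ with
    | nu φ0 =>
      obtain ⟨R', ⟨tr⟩, ⟨bc⟩⟩ := ih φ0
      obtain ⟨bc'⟩ := BC.renameN bc swap
      exact ⟨_, ⟨.nuB tr⟩, ⟨.nu bc'⟩⟩
    | nuSwap X => exact resNuSwap X (.nuB t)
    | nuSwapInv X =>
      rw [← Proc.rename_swap_swap X] at t
      exact resNuSwap (X.rename swap) (.nuB t)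
  | rep t ih =>
    intro P' φ
    cases φ with
    | rep φ0 =>
      obtain ⟨T', ⟨tr⟩, bc⟩ := ih (BC0.par φ0 (BC0.rep φ0))
      exact ⟨T', ⟨.rep tr⟩, bc⟩

theorem resBCs {Γ : ℕ} {ty : ActTy} {P : Proc Γ} {a : Act ty Γ} {T : Proc (ActTy.tgt ty Γ)}
    (t : Tr P a T) {P' : Proc Γ} (φ : BCs P P') :
    ∃ T' : Proc (ActTy.tgt ty Γ), Nonempty (Tr P' a T') ∧ Nonempty (BC T T') := by
  induction φ with
  | refl => exact ⟨T, ⟨t⟩, ⟨BC.rfl T⟩⟩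
  | tail h step ih =>
    obtain ⟨T1, ⟨t1⟩, ⟨bc1⟩⟩ := ih
    obtain ⟨T2, t2, ⟨bc2⟩⟩ := resBC0 t1 step
    exact ⟨T2, t2, ⟨.trans bc1 bc2⟩⟩


/-- Residuals of traces and braidings: given a trace `t : P ⟶ā R` and a braiding
`γ = φ ∘ σ : P ⋈ P'` (a braid renaming `σ` together with a braiding congruence
`φ : σ* P ≅ P'`), there exist a process `R'`, a trace `t/γ : P' ⟶(σ* ā) R'` whose
action sequence is the renaming of `ā` along `σ`, and a braiding `γ/t : R ⋈ R'`. -/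
theorem Trace.residual_braiding {Γ Δ : ℕ} {P : Proc Γ} {as : ActSeq Γ Δ} {R : Proc Δ}
    (t : Trace P as R) (σ : Name Γ → Name Γ) (hσ : IsBraid σ) {P' : Proc Γ}
    (φ : BC (P.rename σ) P') :
    ∃ R' : Proc Δ, Nonempty (Trace P' (as.rename σ) R') ∧
      ∃ σ' : Name Δ → Name Δ, IsBraid σ' ∧ Nonempty (BC (R.rename σ') R') := by
  induction t with
  | nil P => exact ⟨P', ⟨.nil P'⟩, σ, hσ, ⟨φ⟩⟩
  | @cons Γ Δ ty P a R1 as' S tr tl ih =>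
    obtain ⟨tr'⟩ := Tr.renameN tr σ
    obtain ⟨R1', ⟨tr''⟩, ⟨bc⟩⟩ := resBCs tr' (BC.toBCs φ)
    have hσ' : IsBraid (resRen ty σ) := by
      cases ty with
      | bound => exact .suc hσ
      | nonbound => exact hσ
    obtain ⟨S', ⟨tl'⟩, rest⟩ := ih (resRen ty σ) hσ' bc
    exact ⟨S', ⟨.cons tr'' tl'⟩, rest⟩
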